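/- Let q_1,...,q_K ∈ [δ,1] with δ > 0 and let p_k = (1/N)∑_{j=1}^N X_{k,j} where the X_{k,j} are independent Bernoulli(q_k) random variables. Then for any λ > 1, P(∏_k p_k ≥ λ ∏_k q_k) ≤ exp(−2 δ² (log λ)² N / K). -/

import Mathlib

open Real

/-- Hoeffding's lemma for a centered Bernoulli(q) variable. -/
theorem bern_hoeffding {q : ℝ} (hq0 : 0 ≤ q) (hq1 : q ≤ 1) (s : ℝ) :
    q * exp (s * (1 - q)) + (1 - q) * exp (-(s * q)) ≤ exp (s ^ 2 / 8) := by
  set v : ℝ → ℝ := fun s => q * exp s + (1 - q) with hv_def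
  have hv : ∀ s, 0 < v s := by
    intro s
    rcases eq_or_lt_of_le hq0 with h | h
    · simp [hv_def, ← h]
    · exact add_pos_of_pos_of_nonneg (mul_pos h (exp_pos s)) (by linarith)
  have hv' : ∀ s, HasDerivAt v (q * exp s) s := fun s =>
    ((Real.hasDerivAt_exp s).const_mul q).add_const (1 - q)
  set g : ℝ → ℝ := fun s => q + s / 4 - q * exp s / v s with hg_def
  set d : ℝ → ℝ := fun s => s * q + s ^ 2 / 8 - log (v s) with hd_def
  have hd' : ∀ s, HasDerivAt d (g s) s := by
    intro s
    have h1 : HasDerivAt (fun s : ℝ => s * q + s ^ 2 / 8) (q + s / 4) s := by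
      have := ((hasDerivAt_id s).mul_const q).add ((hasDerivAt_pow 2 s).div_const 8)
      exact this.congr_deriv (by norm_num; ring)
    have h2 : HasDerivAt (fun s => log (v s)) (q * exp s / v s) s :=
      (hv' s).log (hv s).ne'
    exact h1.sub h2
  have hg' : ∀ s, HasDerivAt g (1 / 4 - q * exp s * (1 - q) / (v s) ^ 2) s := by
    intro s
    have h1 : HasDerivAt (fun s : ℝ => q + s / 4) (1 / 4) s := by
      simpa using ((hasDerivAt_id s).div_const 4).const_add q
    have h2 : HasDerivAt (fun s => q * exp s / v s)
        ((q * exp s * v s - q * exp s * (q * exp s)) / (v s) ^ 2) s :=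
      ((Real.hasDerivAt_exp s).const_mul q).div (hv' s) (hv s).ne'
    have := h1.sub h2
    refine this.congr_deriv ?_
    congr 2
    simp only [hv_def]
    ring
  have hgnn : ∀ s, 0 ≤ 1 / 4 - q * exp s * (1 - q) / (v s) ^ 2 := by
    intro s
    rw [sub_nonneg, div_le_iff₀ (pow_pos (hv s) 2)]
    have h : (v s) ^ 2 = (q * exp s + (1 - q)) ^ 2 := rfl
    nlinarith [sq_nonneg (q * exp s - (1 - q)), exp_pos s]
  have hgmono : Monotone g :=
    monotone_of_deriv_nonneg (fun s => (hg' s).differentiableAt)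
      (fun s => by rw [(hg' s).deriv]; exact hgnn s)
  have hg0 : g 0 = 0 := by
    simp [hg_def, hv_def]
  have hddiff : ∀ s, DifferentiableAt ℝ d s := fun s => (hd' s).differentiableAt
  have hd0 : d 0 = 0 := by simp [hd_def, hv_def]
  have hdcont : Continuous d := by
    have : Differentiable ℝ d := fun s => hddiff s
    exact this.continuous
  have hderiv : ∀ s, deriv d s = g s := fun s => (hd' s).deriv
  have hdnn : ∀ s, 0 ≤ d s := by
    intro s
    rcases le_total 0 s with h | h
    · have hmono : MonotoneOn d (Set.Ici 0) :=
        monotoneOn_of_deriv_nonneg (convex_Ici 0) hdcont.continuousOn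
          (fun x _ => (hddiff x).differentiableWithinAt)
          (fun x hx => by
            rw [hderiv]
            rw [interior_Ici] at hx
            have := hgmono (le_of_lt hx)
            rwa [hg0] at this)
      have := hmono (Set.self_mem_Ici) h h
      rwa [hd0] at this
    · have hanti : AntitoneOn d (Set.Iic 0) :=
        antitoneOn_of_deriv_nonpos (convex_Iic 0) hdcont.continuousOn
          (fun x _ => (hddiff x).differentiableWithinAt)
          (fun x hx => by
            rw [hderiv]
            rw [interior_Iic] at hx
            have := hgmono (le_of_lt hx)
            rw [hg0] at this
            linarith)
      have := hanti h Set.self_mem_Iic h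
      rwa [hd0] at this
  -- conclude
  have hlog : log (v s) ≤ s * q + s ^ 2 / 8 := by have := hdnn s; simp [hd_def] at this; linarith
  have hvle : v s ≤ exp (s * q + s ^ 2 / 8) := by
    rw [← Real.exp_log (hv s)]
    exact exp_le_exp.mpr hlog
  have := mul_le_mul_of_nonneg_right hvle (le_of_lt (exp_pos (-(s * q))))
  rw [← Real.exp_add] at this
  have heq : v s * exp (-(s * q)) =
      q * exp (s * (1 - q)) + (1 - q) * exp (-(s * q)) := by
    simp only [hv_def]
    rw [add_mul, mul_assoc, ← Real.exp_add]
    ring_nf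
  rw [heq] at this
  refine this.trans_eq (congrArg exp ?_)
  ring

open MeasureTheory ProbabilityTheory Finset

theorem hdr_multiplicative_error_bound
    {Ω : Type*} [MeasureSpace Ω] [IsProbabilityMeasure (ℙ : Measure Ω)]
    {K N : ℕ} (hK : 0 < K) (hN : 0 < N)
    {δ : ℝ} (hδ : 0 < δ) (q : Fin K → ℝ) (hq : ∀ k, q k ∈ Set.Icc δ 1)
    (X : Fin K → Fin N → Ω → ℝ)
    (hmeas : ∀ k j, Measurable (X k j))
    (hBer : ∀ k j ω, X k j ω = 0 ∨ X k j ω = 1)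
    (hlaw : ∀ k j, ℙ {ω | X k j ω = 1} = ENNReal.ofReal (q k))
    (hindep : iIndepFun (fun (p : Fin K × Fin N) => X p.1 p.2) ℙ)
    {lam : ℝ} (hlam : 1 < lam) :
    ℙ {ω | lam * ∏ k, q k ≤ ∏ k, (1 / (N : ℝ)) * ∑ j, X k j ω} ≤
      ENNReal.ofReal (Real.exp (-2 * δ^2 * (Real.log lam)^2 * N / K)) := by
  have hqδ : ∀ k, δ ≤ q k := fun k => (hq k).1
  have hq1 : ∀ k, q k ≤ 1 := fun k => (hq k).2
  have hqpos : ∀ k, 0 < q k := fun k => lt_of_lt_of_le hδ (hqδ k)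
  set L := Real.log lam with hL_def
  have hL : 0 < L := Real.log_pos hlam
  -- the centered, normalized variables
  set Z : Fin K × Fin N → Ω → ℝ := fun p ω => (X p.1 p.2 ω - q p.1) / q p.1 with hZ_def
  have hZmeas : ∀ p, Measurable (Z p) := fun p =>
    ((hmeas p.1 p.2).sub_const _).div_const _
  have hZindep : iIndepFun Z ℙ := by
    have := hindep.comp (fun p : Fin K × Fin N => fun y : ℝ => (y - q p.1) / q p.1)
      (fun p => (measurable_id.sub_const _).div_const _)
    exact this
  -- event inclusion
  have hsub : {ω | lam * ∏ k, q k ≤ ∏ k, (1 / (N : ℝ)) * ∑ j, X k j ω} ⊆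
      {ω | (N : ℝ) * L ≤ (∑ p, Z p) ω} := by
    intro ω hω
    simp only [Set.mem_setOf_eq] at hω ⊢
    set x : Fin K → ℝ := fun k => ((1 / (N : ℝ)) * ∑ j, X k j ω - q k) / q k with hx_def
    have hprodq : 0 < ∏ k, q k := Finset.prod_pos (fun k _ => hqpos k)
    have hfac : ∀ k, (1 / (N : ℝ)) * ∑ j, X k j ω ≤ q k * Real.exp (x k) := by
      intro k
      have h1 : (1 / (N : ℝ)) * ∑ j, X k j ω = q k * (1 + x k) := by
        rw [hx_def]
        have hq' := (hqpos k).ne'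
        have hN' : (N : ℝ) ≠ 0 := Nat.cast_ne_zero.mpr hN.ne'
        field_simp
        ring
      rw [h1]
      exact mul_le_mul_of_nonneg_left
        (by linarith [Real.add_one_le_exp (x k)]) (hqpos k).le
    have hnn : ∀ k, (0:ℝ) ≤ (1 / (N : ℝ)) * ∑ j, X k j ω := by
      intro k
      apply mul_nonneg (by positivity)
      exact Finset.sum_nonneg fun j _ => by rcases hBer k j ω with h | h <;> rw [h] <;> norm_num
    have hprod : ∏ k, (1 / (N : ℝ)) * ∑ j, X k j ω ≤
        (∏ k, q k) * Real.exp (∑ k, x k) := by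
      rw [Real.exp_sum, ← Finset.prod_mul_distrib]
      exact Finset.prod_le_prod (fun k _ => hnn k) (fun k _ => hfac k)
    have hlamle : lam ≤ Real.exp (∑ k, x k) := by
      have h2 : lam * ∏ k, q k ≤ Real.exp (∑ k, x k) * ∏ k, q k := by
        have hc := mul_comm (∏ k, q k) (Real.exp (∑ k, x k))
        linarith [le_trans hω hprod]
      exact le_of_mul_le_mul_right h2 hprodq
    have hLle : L ≤ ∑ k, x k := by
      rw [hL_def, ← Real.log_exp (∑ k, x k)]
      exact (Real.log_le_log_iff (by positivity) (Real.exp_pos _)).mpr hlamle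
    -- relate ∑ x to ∑ Z
    have hxZ : ∑ k, x k = (1 / (N : ℝ)) * (∑ p, Z p) ω := by
      simp only [Finset.sum_apply]
      rw [Fintype.sum_prod_type, Finset.mul_sum]
      apply Finset.sum_congr rfl
      intro k _
      show x k = (1 / (N : ℝ)) * ∑ j, (X k j ω - q k) / q k
      rw [hx_def]
      have hq' := (hqpos k).ne'
      have hN' : (N : ℝ) ≠ 0 := Nat.cast_ne_zero.mpr hN.ne'
      rw [← Finset.sum_div, Finset.sum_sub_distrib, Finset.sum_const, Finset.card_univ,
        Fintype.card_fin, nsmul_eq_mul]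
      field_simp
    rw [hxZ] at hLle
    have hNpos : (0:ℝ) < N := Nat.cast_pos.mpr hN
    calc (N : ℝ) * L ≤ (N : ℝ) * ((1 / (N : ℝ)) * (∑ p, Z p) ω) := by
          exact mul_le_mul_of_nonneg_left hLle hNpos.le
    _ = (∑ p, Z p) ω := by field_simp
  -- integral facts for the Bernoulli variables
  have hA : ∀ k j, MeasurableSet {ω | X k j ω = 1} := by
    intro k j
    have : {ω | X k j ω = 1} = X k j ⁻¹' {1} := rfl
    rw [this]
    exact (hmeas k j) (measurableSet_singleton 1)
  have hXeq : ∀ k j, X k j = Set.indicator {ω | X k j ω = 1} (fun _ => (1:ℝ)) := by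
    intro k j
    funext ω
    by_cases h : ω ∈ {ω | X k j ω = 1}
    · rw [Set.indicator_of_mem h]; exact h
    · rw [Set.indicator_of_notMem h]
      rcases hBer k j ω with h0 | h1
      · exact h0
      · exact absurd h1 h
  have hXint : ∀ k j, Integrable (X k j) ℙ := by
    intro k j
    rw [hXeq k j]
    exact (integrable_const (1:ℝ)).indicator (hA k j)
  have hXintegral : ∀ k j, ∫ ω, X k j ω ∂ℙ = q k := by
    intro k j
    rw [show (fun ω => X k j ω) = X k j from rfl, hXeq k j,
      integral_indicator_const (1:ℝ) (hA k j), measureReal_def, hlaw k j, smul_eq_mul, mul_one,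
      ENNReal.toReal_ofReal (le_of_lt (lt_of_lt_of_le hδ (hqδ k)))]
  -- choose Chernoff parameter
  set t : ℝ := 4 * δ ^ 2 * L / K with ht_def
  have hKpos : (0:ℝ) < K := Nat.cast_pos.mpr hK
  have htpos : 0 < t := by positivity
  -- pointwise linear form of exp (t * Z p)
  have hexpZ : ∀ (p : Fin K × Fin N) ω, Real.exp (t * Z p ω) =
      (Real.exp (t * (1 - q p.1) / q p.1) - Real.exp (-t)) * X p.1 p.2 ω
        + Real.exp (-t) := by
    intro p ω
    rcases hBer p.1 p.2 ω with h0 | h1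
    · rw [hZ_def]
      simp only [h0]
      rw [zero_sub, mul_zero, zero_add]
      congr 1
      rw [div_eq_mul_inv, ← mul_assoc]
      field_simp [(hqpos p.1).ne']
    · rw [hZ_def]
      simp only [h1, mul_one]
      rw [sub_add_cancel]
      congr 1
      field_simp [(hqpos p.1).ne']
  have hZint : ∀ p : Fin K × Fin N, Integrable (fun ω => Real.exp (t * Z p ω)) ℙ := by
    intro p
    simp only [hexpZ p]
    exact ((hXint p.1 p.2).const_mul _).add (integrable_const _)
  -- mgf of each Z p
  have hmgf : ∀ p : Fin K × Fin N, mgf (Z p) ℙ t ≤ Real.exp (t ^ 2 / (8 * δ ^ 2)) := by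
    intro p
    have hcomp : mgf (Z p) ℙ t =
        q p.1 * Real.exp (t * (1 - q p.1) / q p.1) + (1 - q p.1) * Real.exp (-t) := by
      rw [mgf]
      simp only [hexpZ p]
      rw [integral_add ((hXint p.1 p.2).const_mul _) (integrable_const _),
        integral_const_mul, hXintegral p.1 p.2, integral_const, measureReal_def, measure_univ,
        ENNReal.toReal_one, one_smul]
      ring
    rw [hcomp]
    have hb := bern_hoeffding (le_of_lt (hqpos p.1)) (hq1 p.1) (t / q p.1)
    have he1 : t / q p.1 * (1 - q p.1) = t * (1 - q p.1) / q p.1 := by ring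
    have he2 : -(t / q p.1 * q p.1) = -t := by
      rw [div_mul_cancel₀ _ (hqpos p.1).ne']
    rw [he1, he2] at hb
    refine hb.trans (Real.exp_le_exp.mpr ?_)
    have h8 : t ^ 2 / (8 * δ ^ 2) = (t / δ) ^ 2 / 8 := by
      field_simp
    rw [h8]
    have hdiv : t / q p.1 ≤ t / δ :=
      div_le_div_of_nonneg_left htpos.le hδ (hqδ p.1)
    have hnn : 0 ≤ t / q p.1 := div_nonneg htpos.le (hqpos p.1).le
    have := pow_le_pow_left₀ hnn hdiv 2
    linarith
  -- Chernoff bound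
  have hint_sum : Integrable (fun ω => Real.exp (t * (∑ p, Z p) ω)) ℙ :=
    hZindep.integrable_exp_mul_sum hZmeas (fun p _ => hZint p)
  have hchern := measure_ge_le_exp_mul_mgf (μ := ℙ) (X := ∑ p, Z p) ((N : ℝ) * L)
    htpos.le hint_sum
  have hmgfsum : mgf (∑ p, Z p) ℙ t ≤ Real.exp ((K * N : ℝ) * (t ^ 2 / (8 * δ ^ 2))) := by
    rw [hZindep.mgf_sum hZmeas]
    calc ∏ p : Fin K × Fin N, mgf (Z p) ℙ t
        ≤ ∏ _p : Fin K × Fin N, Real.exp (t ^ 2 / (8 * δ ^ 2)) :=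
          Finset.prod_le_prod (fun p _ => mgf_nonneg) (fun p _ => hmgf p)
      _ = Real.exp ((K * N : ℝ) * (t ^ 2 / (8 * δ ^ 2))) := by
          rw [Finset.prod_const, ← Real.exp_nat_mul]
          congr 1
          simp [Finset.card_univ]
  have hfinal : (ℙ {ω | (N : ℝ) * L ≤ (∑ p, Z p) ω}).toReal ≤
      Real.exp (-2 * δ ^ 2 * L ^ 2 * N / K) := by
    refine hchern.trans ?_
    calc Real.exp (-t * ((N : ℝ) * L)) * mgf (∑ p, Z p) ℙ t
        ≤ Real.exp (-t * ((N : ℝ) * L)) * Real.exp ((K * N : ℝ) * (t ^ 2 / (8 * δ ^ 2))) :=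
          mul_le_mul_of_nonneg_left hmgfsum (Real.exp_pos _).le
      _ = Real.exp (-t * ((N : ℝ) * L) + (K * N : ℝ) * (t ^ 2 / (8 * δ ^ 2))) :=
          (Real.exp_add _ _).symm
      _ = Real.exp (-2 * δ ^ 2 * L ^ 2 * N / K) := by
          congr 1
          rw [ht_def]
          field_simp
          ring
  calc ℙ {ω | lam * ∏ k, q k ≤ ∏ k, (1 / (N : ℝ)) * ∑ j, X k j ω}
      ≤ ℙ {ω | (N : ℝ) * L ≤ (∑ p, Z p) ω} := measure_mono hsub
    _ = ENNReal.ofReal (ℙ {ω | (N : ℝ) * L ≤ (∑ p, Z p) ω}).toReal :=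
        (ENNReal.ofReal_toReal (measure_ne_top _ _)).symm
    _ ≤ ENNReal.ofReal (Real.exp (-2 * δ ^ 2 * (Real.log lam) ^ 2 * N / K)) :=
        ENNReal.ofReal_le_ofReal hfinal
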